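/- For all integers j ≥ i ≥ 0 with j ≠ i+1, the subgroup of F generated by Jones' subgroup F⃗ together with the element x_i x_j equals G. -/

import Mathlib

set_option maxHeartbeats 1000000

noncomputable section

/-- The unit interval `[0,1]` as a type. -/
abbrev I : Type := Set.Icc (0:ℝ) 1

/-- The underlying function of the generator `x₀` of Thompson's group `F`. -/
def x0fun (t : ℝ) : ℝ := if t ≤ 1/4 then 2*t else if t ≤ 1/2 then t + 1/4 else t/2 + 1/2

/-- The inverse of `x0fun`. -/
def x0inv (t : ℝ) : ℝ := if t ≤ 1/2 then t/2 else if t ≤ 3/4 then t - 1/4 else 2*t - 1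

/-- The underlying function of the generator `x₁` of Thompson's group `F`. -/
def x1fun (t : ℝ) : ℝ :=
  if t ≤ 1/2 then t else if t ≤ 5/8 then 2*t - 1/2 else if t ≤ 3/4 then t + 1/8 else t/2 + 1/2

/-- The inverse of `x1fun`. -/
def x1inv (t : ℝ) : ℝ :=
  if t ≤ 1/2 then t else if t ≤ 3/4 then t/2 + 1/4 else if t ≤ 7/8 then t - 1/8 else 2*t - 1

/-- The generator `x₀` of Thompson's group `F`, as a bijection of `[0,1]`. -/
def x₀ : Equiv.Perm I where
  toFun t := ⟨x0fun t.1, by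
    obtain ⟨h0, h1⟩ := Set.mem_Icc.mp t.2
    simp only [Set.mem_Icc, x0fun]
    split_ifs <;> constructor <;> linarith⟩
  invFun t := ⟨x0inv t.1, by
    obtain ⟨h0, h1⟩ := Set.mem_Icc.mp t.2
    simp only [Set.mem_Icc, x0inv]
    split_ifs <;> constructor <;> linarith⟩
  left_inv t := by
    obtain ⟨h0, h1⟩ := Set.mem_Icc.mp t.2
    apply Subtype.ext
    show x0inv (x0fun t.1) = t.1
    simp only [x0fun, x0inv]
    split_ifs <;> linarith
  right_inv t := by
    obtain ⟨h0, h1⟩ := Set.mem_Icc.mp t.2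
    apply Subtype.ext
    show x0fun (x0inv t.1) = t.1
    simp only [x0fun, x0inv]
    split_ifs <;> linarith

/-- The generator `x₁` of Thompson's group `F`, as a bijection of `[0,1]`. -/
def x₁ : Equiv.Perm I where
  toFun t := ⟨x1fun t.1, by
    obtain ⟨h0, h1⟩ := Set.mem_Icc.mp t.2
    simp only [Set.mem_Icc, x1fun]
    split_ifs <;> constructor <;> linarith⟩
  invFun t := ⟨x1inv t.1, by
    obtain ⟨h0, h1⟩ := Set.mem_Icc.mp t.2
    simp only [Set.mem_Icc, x1inv]
    split_ifs <;> constructor <;> linarith⟩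
  left_inv t := by
    obtain ⟨h0, h1⟩ := Set.mem_Icc.mp t.2
    apply Subtype.ext
    show x1inv (x1fun t.1) = t.1
    simp only [x1fun, x1inv]
    split_ifs <;> linarith
  right_inv t := by
    obtain ⟨h0, h1⟩ := Set.mem_Icc.mp t.2
    apply Subtype.ext
    show x1fun (x1inv t.1) = t.1
    simp only [x1fun, x1inv]
    split_ifs <;> linarith

/-- Composition in Thompson's group `F` is from left to right: the product `f·g` in the paper
is the function `t ↦ g (f t)`.  In Lean, `Equiv.Perm` multiplication is composition from right
to left: `(f * g) t = f (g t)`.  Hence a paper product `a₁ a₂ ⋯ aₙ` corresponds to the Lean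
product `aₙ * ⋯ * a₂ * a₁`.

`x i` is the standard generator `x_i` of Thompson's group `F`: here `x_0, x_1` are the explicit
piecewise-linear maps, and for `i ≥ 1`, `x_{i+1} = x_0^{-i} x_1 x_0^{i}` (left-to-right
composition), which in Lean's convention is `x₀ ^ i * x₁ * (x₀ ^ i)⁻¹`. -/
def x (i : ℕ) : Equiv.Perm I := if i = 0 then x₀ else x₀ ^ (i-1) * x₁ * (x₀ ^ (i-1))⁻¹

/-- Thompson's group `F`, realized as the group of increasing piecewise-linear homeomorphisms of
`[0,1]` with dyadic breakpoints and slopes powers of 2; it is generated by `x_0` and `x_1`. -/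
def F : Subgroup (Equiv.Perm I) := Subgroup.closure {x 0, x 1}

/-- The subgroup `G = ⟨x_0x_2, x_1x_2⟩` of `F` (products written left-to-right, so
`x_0x_2` is the Lean element `x 2 * x 0`). -/
def G : Subgroup (Equiv.Perm I) := Subgroup.closure {x 2 * x 0, x 2 * x 1}

/-- Jones' subgroup `F⃗ = ⟨x_0x_1, x_1x_2, x_2x_3⟩` of `F` (products written left-to-right). -/
def JonesF : Subgroup (Equiv.Perm I) := Subgroup.closure {x 1 * x 0, x 2 * x 1, x 3 * x 2}

lemma x_mem_F (i : ℕ) : x i ∈ F := by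
  have h0 : x 0 ∈ F := Subgroup.subset_closure (by simp)
  have h1 : x 1 ∈ F := Subgroup.subset_closure (by simp)
  have hx0 : x₀ ∈ F := by simpa [x] using h0
  have hx1 : x₁ ∈ F := by simpa [x] using h1
  rcases Nat.eq_zero_or_pos i with h | h
  · subst h; exact h0
  · have : x i = x₀ ^ (i-1) * x₁ * (x₀ ^ (i-1))⁻¹ := by
      simp [x, Nat.pos_iff_ne_zero.mp h]
    rw [this]
    exact mul_mem (mul_mem (pow_mem hx0 _) hx1) (inv_mem (pow_mem hx0 _))

lemma y0_mem_G : x 2 * x 0 ∈ G := Subgroup.subset_closure (by simp)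

lemma y1_mem_G : x 2 * x 1 ∈ G := Subgroup.subset_closure (by simp)

/-- The length `|w|` of an element of `F`: the minimal `n` such that `w` is a product of `n`
elements of `{x_i^{±1} : i ≥ 0}`.  This equals the length of the normal form of `w`. -/
def len (w : Equiv.Perm I) : ℕ :=
  sInf {n | ∃ l : List (Equiv.Perm I), l.length = n ∧
    (∀ a ∈ l, ∃ i : ℕ, a = x i ∨ a = (x i)⁻¹) ∧ l.prod = w}

/-- The element of `F` given by the positive word `x_{i_1} x_{i_2} ⋯ x_{i_n}` (composition from
left to right), where `l = [i_1, i_2, …, i_n]`.  Since Lean's multiplication of permutations is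
composition from right to left, this is the Lean product of the reversed list of letters. -/
def pp (l : List ℕ) : Equiv.Perm I := ((l.map x).reverse).prod

/-- `l = [i_1, …, i_n]` encodes a *block*: a positive normal form `x_{i_1}⋯x_{i_n}`
(so `i_1 ≤ ⋯ ≤ i_n`) with `i_1 ≠ i_n` and `i_j < i_1 + j` for all `j = 1, …, n`
(here with 0-based indexing: `l[k] < l[0] + k + 1`). -/
def IsBlock (l : List ℕ) : Prop :=
  l ≠ [] ∧ l.Pairwise (· ≤ ·) ∧ l.headI ≠ l.getLastD 0 ∧
    ∀ k < l.length, l.getD k 0 < l.headI + k + 1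

/-- The double coset `F⃗ a F⃗` of Jones' subgroup.  (As a set this does not depend on the
composition convention, since `u, v` range over all of `F⃗`.) -/
def dCoset (a : Equiv.Perm I) : Set (Equiv.Perm I) :=
  {w | ∃ u ∈ JonesF, ∃ v ∈ JonesF, w = v * a * u}

/-- A real number is dyadic if it has the form `a / 2^n` with `a, n` natural numbers. -/
def IsDyadic (α : ℝ) : Prop := ∃ (a : ℕ) (n : ℕ), α = a / 2^n

/-- The subgroup of all permutations fixing every point of `U`. -/
def fixing (U : Set ℝ) : Subgroup (Equiv.Perm I) where
  carrier := {g | ∀ t : I, (t : ℝ) ∈ U → g t = t}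
  one_mem' := fun _ _ => rfl
  mul_mem' := by
    intro a b ha hb t ht
    simp only [Equiv.Perm.mul_apply]
    rw [hb t ht, ha t ht]
  inv_mem' := by
    intro a ha t ht
    conv_lhs => rw [← ha t ht]
    exact Equiv.symm_apply_apply a t

/-- `H_U`: the stabilizer in `F` of the finite set `U ⊂ (0,1)`, i.e. the subgroup of all
elements of `F` fixing every point of `U`. -/
def HU (U : Set ℝ) : Subgroup (Equiv.Perm I) := F ⊓ fixing U

-- Part 1: analysis lemmas
lemma x1_fix (t : I) (h : (t:ℝ) ≤ 1/2) : x₁ t = t := by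
  apply Subtype.ext
  obtain ⟨h0, h1⟩ := Set.mem_Icc.mp t.2
  show x1fun t = t
  simp only [x1fun]
  split_ifs <;> linarith

lemma x1_eq_x0 (t : I) (h : 3/4 ≤ (t:ℝ)) : x₁ t = x₀ t := by
  apply Subtype.ext
  obtain ⟨h0, h1⟩ := Set.mem_Icc.mp t.2
  show x1fun t = x0fun t
  simp only [x1fun, x0fun]
  split_ifs <;> linarith

lemma x0_big (t : I) (h : 1/2 < (t:ℝ)) : 3/4 ≤ ((x₀ t : I) : ℝ) := by
  obtain ⟨h0, h1⟩ := Set.mem_Icc.mp t.2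
  show (3:ℝ)/4 ≤ x0fun t
  simp only [x0fun]
  split_ifs <;> linarith

lemma pow_big (k : ℕ) (t : I) (h : 1/2 < (t:ℝ)) : 3/4 ≤ (((x₀^(k+1)) t : I) : ℝ) := by
  induction k with
  | zero => simpa using x0_big t h
  | succ m ih =>
    have hp : x₀ ^ (m+2) = x₀ * x₀ ^ (m+1) := by rw [pow_succ']
    rw [hp]
    have : ((x₀ * x₀ ^ (m+1)) t) = x₀ ((x₀ ^ (m+1)) t) := rfl
    rw [this]
    exact x0_big _ (by linarith [ih])
-- Part 2: generic conjugation lemma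
lemma perm_apply_inv_self {α : Type*} (f : Equiv.Perm α) (x : α) : f (f⁻¹ x) = x :=
  Equiv.apply_symm_apply f x

lemma conj_eq {α : Type*} (a a' b : Equiv.Perm α)
    (hyp : ∀ s, b s ≠ s → a s = a' s) : a * b * a⁻¹ = a' * b * a'⁻¹ := by
  ext t
  simp only [Equiv.Perm.mul_apply]
  by_cases h1 : b (a⁻¹ t) = a⁻¹ t
  · rw [h1, perm_apply_inv_self]
    by_cases h2 : b (a'⁻¹ t) = a'⁻¹ t
    · rw [h2, perm_apply_inv_self]
    · exfalso
      have e1 : a (a'⁻¹ t) = a' (a'⁻¹ t) := hyp _ h2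
      rw [perm_apply_inv_self] at e1
      have : a'⁻¹ t = a⁻¹ t :=
        a.injective (by rw [e1, perm_apply_inv_self])
      rw [this] at h2
      exact h2 h1
  · have e1 : a (a⁻¹ t) = a' (a⁻¹ t) := hyp _ h1
    rw [perm_apply_inv_self] at e1
    have e2 : a'⁻¹ t = a⁻¹ t :=
      a'.injective (by rw [perm_apply_inv_self, ← e1])
    rw [e2]
    have h3 : b (b (a⁻¹ t)) ≠ b (a⁻¹ t) := fun hc => h1 (b.injective hc)
    exact hyp _ h3

-- basic lemmas about x
lemma x_zero : x 0 = x₀ := by simp [x]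

lemma x_succ_def (n : ℕ) : x (n+1) = x₀ ^ n * x₁ * (x₀ ^ n)⁻¹ := by simp [x]

lemma supp_xn (n : ℕ) (hn : 2 ≤ n) (t : I) (h : x n t ≠ t) : 3/4 ≤ (t:ℝ) := by
  obtain ⟨m, rfl⟩ : ∃ m, n = m + 2 := ⟨n - 2, by omega⟩
  rw [x_succ_def] at h
  set u : I := ((x₀ ^ (m+1))⁻¹) t with hu
  have hx1 : x₁ u ≠ u := by
    intro he
    apply h
    simp only [Equiv.Perm.mul_apply]
    rw [← hu, he, hu, perm_apply_inv_self]
  have hu2 : 1/2 < (u:ℝ) := by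
    by_contra hc
    exact hx1 (x1_fix u (by linarith))
  have ht : (x₀ ^ (m+1)) u = t := by rw [hu, perm_apply_inv_self]
  calc (3:ℝ)/4 ≤ (((x₀ ^ (m+1)) u : I) : ℝ) := pow_big m u hu2
    _ = (t : ℝ) := by rw [ht]

lemma x_succ (n : ℕ) (hn : 1 ≤ n) : x₀ * x n * x₀⁻¹ = x (n+1) := by
  obtain ⟨m, rfl⟩ : ∃ m, n = m + 1 := ⟨n - 1, by omega⟩
  rw [x_succ_def, x_succ_def]
  rw [pow_succ']
  group

lemma shift (k m : ℕ) (hm : 1 ≤ m) : x₀ ^ k * x m * (x₀ ^ k)⁻¹ = x (m + k) := by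
  induction k with
  | zero => simp
  | succ j ih =>
    have hp : x₀ ^ (j+1) = x₀ * x₀ ^ j := by rw [pow_succ']
    rw [hp]
    have : x₀ * x₀ ^ j * x m * (x₀ * x₀ ^ j)⁻¹ = x₀ * (x₀ ^ j * x m * (x₀ ^ j)⁻¹) * x₀⁻¹ := by
      group
    rw [this, ih, x_succ (m + j) (by omega), show m + j + 1 = m + (j+1) by omega]

lemma rel1 (n : ℕ) (hn : 2 ≤ n) : x₁ * x n * x₁⁻¹ = x₀ * x n * x₀⁻¹ :=
  conj_eq x₁ x₀ (x n) (fun s hs => x1_eq_x0 s (supp_xn n hn s hs))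

lemma rel (k n : ℕ) (h : k < n) : x k * x n * (x k)⁻¹ = x (n+1) := by
  cases k with
  | zero => rw [x_zero]; exact x_succ n (by omega)
  | succ m =>
    obtain ⟨e, rfl⟩ : ∃ e, n = e + 2 + m := ⟨n - 2 - m, by omega⟩
    have hxk : x (m+1) = x₀ ^ m * x₁ * (x₀ ^ m)⁻¹ := x_succ_def m
    have hxn : x (e + 2 + m) = x₀ ^ m * x (e+2) * (x₀ ^ m)⁻¹ := (shift m (e+2) (by omega)).symm
    have key : x₁ * x (e+2) * x₁⁻¹ = x ((e+2)+1) := by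
      rw [rel1 (e+2) (by omega)]; exact x_succ (e+2) (by omega)
    calc x (m+1) * x (e+2+m) * (x (m+1))⁻¹
        = x₀ ^ m * (x₁ * x (e+2) * x₁⁻¹) * (x₀ ^ m)⁻¹ := by rw [hxk, hxn]; group
      _ = x₀ ^ m * x ((e+2)+1) * (x₀ ^ m)⁻¹ := by rw [key]
      _ = x (((e+2)+1) + m) := shift m ((e+2)+1) (by omega)
      _ = x ((e+2+m) + 1) := by rw [show ((e+2)+1)+m = (e+2+m)+1 by omega]

lemma CM (k n : ℕ) (h : k < n) : x k * x n = x (n+1) * x k := by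
  rw [← rel k n h]; group
-- Part 3: membership in G
lemma A_mem : x 2 * x 0 ∈ G := Subgroup.subset_closure (by simp)
lemma B_mem : x 2 * x 1 ∈ G := Subgroup.subset_closure (by simp)

lemma M1_mem : x 0 * (x 2)⁻¹ ∈ G := by
  have e : x 0 * (x 2)⁻¹ = (x 2 * x 0) * (x 2 * x 1)⁻¹ := by
    rw [← rel 0 1 (by omega)]; group
  rw [e]; exact mul_mem A_mem (inv_mem B_mem)

lemma D_mem : x 0 * x 0 ∈ G := by
  have e : x 0 * x 0 = (x 0 * (x 2)⁻¹) * (x 2 * x 0) := by group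
  rw [e]; exact mul_mem M1_mem A_mem

lemma conjA (n : ℕ) (h : 2 ≤ n) :
    (x 2 * x 0) * x n * (x 2 * x 0)⁻¹ = x (n+2) := by
  have h1 := rel 0 n (by omega)
  have h2 := rel 2 (n+1) (by omega)
  calc (x 2 * x 0) * x n * (x 2 * x 0)⁻¹
      = x 2 * (x 0 * x n * (x 0)⁻¹) * (x 2)⁻¹ := by group
    _ = x 2 * x (n+1) * (x 2)⁻¹ := by rw [h1]
    _ = x (n+2) := h2

lemma conjA1 : (x 2 * x 0) * x 1 * (x 2 * x 0)⁻¹ = x 2 := by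
  have h1 := rel 0 1 (by omega)
  calc (x 2 * x 0) * x 1 * (x 2 * x 0)⁻¹
      = x 2 * (x 0 * x 1 * (x 0)⁻¹) * (x 2)⁻¹ := by group
    _ = x 2 * x 2 * (x 2)⁻¹ := by rw [h1]
    _ = x 2 := by group

lemma conjD (n : ℕ) (h : 1 ≤ n) :
    (x 0 * x 0) * x n * (x 0 * x 0)⁻¹ = x (n+2) := by
  have h1 := rel 0 n (by omega)
  have h2 := rel 0 (n+1) (by omega)
  calc (x 0 * x 0) * x n * (x 0 * x 0)⁻¹
      = x 0 * (x 0 * x n * (x 0)⁻¹) * (x 0)⁻¹ := by group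
    _ = x 0 * x (n+1) * (x 0)⁻¹ := by rw [h1]
    _ = x (n+2) := h2

lemma X4X2_mem : x 4 * x 2 ∈ G := by
  have e : x 4 * x 2 = (x 2 * x 0) * (x 2 * x 1) * (x 2 * x 0)⁻¹ := by
    calc x 4 * x 2 = ((x 2 * x 0) * x 2 * (x 2 * x 0)⁻¹) * ((x 2 * x 0) * x 1 * (x 2 * x 0)⁻¹) := by
          rw [conjA 2 (by omega), conjA1]
      _ = (x 2 * x 0) * (x 2 * x 1) * (x 2 * x 0)⁻¹ := by group
  rw [e]; exact mul_mem (mul_mem A_mem B_mem) (inv_mem A_mem)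

lemma X1sq_mem : x 1 * x 1 ∈ G := by
  have e1 : (x 2 * x 1) * (x 2 * x 1) = (x 4 * x 2) * (x 1 * x 1) := by
    calc (x 2 * x 1) * (x 2 * x 1) = x 2 * (x 1 * x 2) * x 1 := by group
      _ = x 2 * (x 3 * x 1) * x 1 := by rw [CM 1 2 (by omega)]
      _ = (x 2 * x 3) * (x 1 * x 1) := by group
      _ = (x 4 * x 2) * (x 1 * x 1) := by rw [CM 2 3 (by omega)]
  have e2 : x 1 * x 1 = (x 4 * x 2)⁻¹ * ((x 2 * x 1) * (x 2 * x 1)) := by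
    rw [e1]; group
  rw [e2]; exact mul_mem (inv_mem X4X2_mem) (mul_mem B_mem B_mem)

lemma X2sq_mem : x 2 * x 2 ∈ G := by
  have e : x 2 * x 2 = (x 2 * x 0) * (x 1 * x 1) * (x 2 * x 0)⁻¹ := by
    calc x 2 * x 2 = ((x 2 * x 0) * x 1 * (x 2 * x 0)⁻¹) * ((x 2 * x 0) * x 1 * (x 2 * x 0)⁻¹) := by
          rw [conjA1]
      _ = (x 2 * x 0) * (x 1 * x 1) * (x 2 * x 0)⁻¹ := by group
  rw [e]; exact mul_mem (mul_mem A_mem X1sq_mem) (inv_mem A_mem)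

lemma SQ : ∀ m, x m * x m ∈ G := by
  intro m
  induction m using Nat.strong_induction_on with
  | _ m ih =>
    match m with
    | 0 => exact D_mem
    | 1 => exact X1sq_mem
    | 2 => exact X2sq_mem
    | (k+3) =>
      have e : x (k+3) * x (k+3) = (x 0 * x 0) * (x (k+1) * x (k+1)) * (x 0 * x 0)⁻¹ := by
        calc x (k+3) * x (k+3)
            = ((x 0 * x 0) * x (k+1) * (x 0 * x 0)⁻¹) * ((x 0 * x 0) * x (k+1) * (x 0 * x 0)⁻¹) := by
              rw [conjD (k+1) (by omega)]
          _ = (x 0 * x 0) * (x (k+1) * x (k+1)) * (x 0 * x 0)⁻¹ := by group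
      rw [e]
      exact mul_mem (mul_mem D_mem (ih (k+1) (by omega))) (inv_mem D_mem)

lemma X1X0_mem : x 1 * x 0 ∈ G := by
  have e : x 1 * x 0 = (x 2 * x 0)⁻¹ * (x 2 * x 2) * (x 0 * x 0) := by
    rw [← rel 0 1 (by omega)]; group
  rw [e]; exact mul_mem (mul_mem (inv_mem A_mem) X2sq_mem) D_mem

lemma M6_mem : x 3 * x 2 ∈ G := by
  have e : x 3 * x 2 = ((x 4 * x 4)⁻¹ * (x 4 * x 2))⁻¹ * (x 2 * x 2) := by
    calc x 3 * x 2 = (x 2)⁻¹ * (x 2 * x 3) * x 2 := by group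
      _ = (x 2)⁻¹ * (x 4 * x 2) * x 2 := by rw [CM 2 3 (by omega)]
      _ = ((x 4 * x 4)⁻¹ * (x 4 * x 2))⁻¹ * (x 2 * x 2) := by group
  rw [e]
  exact mul_mem (inv_mem (mul_mem (inv_mem (SQ 4)) X4X2_mem)) X2sq_mem

lemma P2' (m : ℕ) (hm : 2 ≤ m) (hmem : x m * x 1 ∈ G) : x (m+2) * x 2 ∈ G := by
  have e : x (m+2) * x 2 = (x 2 * x 0) * (x m * x 1) * (x 2 * x 0)⁻¹ := by
    calc x (m+2) * x 2
        = ((x 2 * x 0) * x m * (x 2 * x 0)⁻¹) * ((x 2 * x 0) * x 1 * (x 2 * x 0)⁻¹) := by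
          rw [conjA m hm, conjA1]
      _ = (x 2 * x 0) * (x m * x 1) * (x 2 * x 0)⁻¹ := by group
  rw [e]; exact mul_mem (mul_mem A_mem hmem) (inv_mem A_mem)

lemma P1 : ∀ n, 1 ≤ n → x n * x 1 ∈ G := by
  intro n
  induction n using Nat.strong_induction_on with
  | _ n ih =>
    intro hn
    match n, hn with
    | 1, _ => exact X1sq_mem
    | 2, _ => exact B_mem
    | (k+3), _ =>
      have h1 : x (k+1) * x 1 ∈ G := ih (k+1) (by omega) (by omega)
      have h2 : x (k+3+1) * x 2 ∈ G := by
        have := P2' (k+2) (by omega) (ih (k+2) (by omega) (by omega))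
        convert this using 2
      have e : x (k+3) * x 1 = (x (k+4) * x 2)⁻¹ * (x (k+4) * x (k+4)) * (x 2 * x 1) := by
        calc x (k+3) * x 1 = (x 2)⁻¹ * (x 2 * x (k+3)) * x 1 := by group
          _ = (x 2)⁻¹ * (x (k+4) * x 2) * x 1 := by rw [CM 2 (k+3) (by omega)]
          _ = (x (k+4) * x 2)⁻¹ * (x (k+4) * x (k+4)) * (x 2 * x 1) := by group
      rw [e]
      exact mul_mem (mul_mem (inv_mem h2) (SQ (k+4))) B_mem

lemma P0 : ∀ n, x n * x 0 ∈ G := by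
  intro n
  induction n using Nat.strong_induction_on with
  | _ n ih =>
    match n with
    | 0 => exact D_mem
    | 1 => exact X1X0_mem
    | 2 => exact A_mem
    | (k+3) =>
      have e : x (k+3) * x 0 = (x 0 * x 0) * (x (k+1) * x 0) * (x 0 * x 0)⁻¹ := by
        calc x (k+3) * x 0
            = ((x 0 * x 0) * x (k+1) * (x 0 * x 0)⁻¹) * ((x 0 * x 0) * x 0 * (x 0 * x 0)⁻¹) := by
              rw [conjD (k+1) (by omega)]; group
          _ = (x 0 * x 0) * (x (k+1) * x 0) * (x 0 * x 0)⁻¹ := by group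
      rw [e]
      exact mul_mem (mul_mem D_mem (ih (k+1) (by omega))) (inv_mem D_mem)

lemma P2 : ∀ n, 2 ≤ n → x n * x 2 ∈ G := by
  intro n hn
  match n, hn with
  | 2, _ => exact X2sq_mem
  | 3, _ => exact M6_mem
  | (k+4), _ =>
    have := P2' (k+2) (by omega) (P1 (k+2) (by omega))
    convert this using 2

lemma main_mem : ∀ m n, m ≤ n → x n * x m ∈ G := by
  intro m
  induction m using Nat.strong_induction_on with
  | _ m ih =>
    intro n hmn
    match m with
    | 0 => exact P0 n
    | 1 => exact P1 n (by omega)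
    | 2 => exact P2 n (by omega)
    | (k+3) =>
      obtain ⟨e', rfl⟩ : ∃ e', n = (k+3) + e' := ⟨n - (k+3), by omega⟩
      have h1 : x (k+1+e') * x (k+1) ∈ G := ih (k+1) (by omega) (k+1+e') (by omega)
      have e : x (k+3+e') * x (k+3) = (x 0 * x 0) * (x (k+1+e') * x (k+1)) * (x 0 * x 0)⁻¹ := by
        calc x (k+3+e') * x (k+3)
            = ((x 0 * x 0) * x (k+1+e') * (x 0 * x 0)⁻¹) * ((x 0 * x 0) * x (k+1) * (x 0 * x 0)⁻¹) := by
              rw [conjD (k+1+e') (by omega), conjD (k+1) (by omega)]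
              congr 2
              omega
          _ = (x 0 * x 0) * (x (k+1+e') * x (k+1)) * (x 0 * x 0)⁻¹ := by group
      rw [e]
      exact mul_mem (mul_mem D_mem h1) (inv_mem D_mem)
-- Part 4: Jones subgroup contains all x_{n+1} x_n, and descent lemmas
lemma xeq {a b : ℕ} (h : a = b) : x a = x b := by rw [h]

lemma IDg (n : ℕ) :
    (x (n+1) * x n) * (x (n+2) * x (n+1)) * (x (n+1) * x n)⁻¹ = x (n+4) * x (n+3) := by
  have r1 : x n * x (n+2) = x (n+3) * x n := CM n (n+2) (by omega)
  have r2 : x n * x (n+1) * (x n)⁻¹ = x (n+2) := rel n (n+1) (by omega)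
  have r3 : x (n+1) * x (n+3) * (x (n+1))⁻¹ = x (n+4) := rel (n+1) (n+3) (by omega)
  have r4 : x (n+1) * x (n+2) * (x (n+1))⁻¹ = x (n+3) := rel (n+1) (n+2) (by omega)
  calc (x (n+1) * x n) * (x (n+2) * x (n+1)) * (x (n+1) * x n)⁻¹
      = x (n+1) * (x n * x (n+2)) * (x (n+1) * (x n)⁻¹ * (x (n+1))⁻¹) := by group
    _ = x (n+1) * (x (n+3) * x n) * (x (n+1) * (x n)⁻¹ * (x (n+1))⁻¹) := by rw [r1]
    _ = x (n+1) * x (n+3) * (x n * x (n+1) * (x n)⁻¹) * (x (n+1))⁻¹ := by group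
    _ = x (n+1) * x (n+3) * x (n+2) * (x (n+1))⁻¹ := by rw [r2]
    _ = (x (n+1) * x (n+3) * (x (n+1))⁻¹) * (x (n+1) * x (n+2) * (x (n+1))⁻¹) := by group
    _ = x (n+4) * x (n+3) := by rw [r3, r4]

lemma gJ : ∀ n, x (n+1) * x n ∈ JonesF := by
  intro n
  induction n using Nat.strong_induction_on with
  | _ n ih =>
    match n with
    | 0 => exact Subgroup.subset_closure (by simp)
    | 1 => exact Subgroup.subset_closure (by simp)
    | 2 => exact Subgroup.subset_closure (by simp)
    | (k+3) =>
      have e := IDg k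
      have h1 := ih k (by omega)
      have h2 := ih (k+1) (by omega)
      rw [← e]
      exact mul_mem (mul_mem h1 h2) (inv_mem h1)

section descent

variable {H : Subgroup (Equiv.Perm I)} (hg : ∀ n, x (n+1) * x n ∈ H)

include hg

lemma sq_of_gap2 (i : ℕ) (hs : x (i+2) * x i ∈ H) : x i * x i ∈ H := by
  have c_mem : (x i)⁻¹ * x (i+1) ∈ H := by
    have e : (x i)⁻¹ * x (i+1) = (x (i+2) * x i)⁻¹ * (x (i+2) * x (i+1)) := by group
    rw [e]; exact mul_mem (inv_mem hs) (hg (i+1))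
  have r : x i * x (i+1) * (x i)⁻¹ = x (i+2) := rel i (i+1) (by omega)
  have e2 : (x i * x i)⁻¹ =
      ((x i)⁻¹ * x (i+1)) * ((x i)⁻¹ * x (i+1)) * (x (i+2) * x (i+1))⁻¹ := by
    calc (x i * x i)⁻¹
        = (x i)⁻¹ * (x i)⁻¹ * (x i * x (i+1) * (x i)⁻¹) * (x (i+2))⁻¹ := by
          rw [r]; group
      _ = ((x i)⁻¹ * x (i+1)) * ((x i)⁻¹ * x (i+1)) * (x (i+2) * x (i+1))⁻¹ := by group
  have : (x i * x i)⁻¹ ∈ H := by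
    rw [e2]; exact mul_mem (mul_mem c_mem c_mem) (inv_mem (hg (i+1)))
  simpa using inv_mem this

lemma gap3_of_sq (i : ℕ) (hs : x i * x i ∈ H) : x (i+3) * x i ∈ H := by
  have r : x i * x (i+1) * (x i)⁻¹ = x (i+2) := rel i (i+1) (by omega)
  have r2 : x i * x (i+2) = x (i+3) * x i := CM i (i+2) (by omega)
  have e : (x i * x i) * (x (i+1) * x i) * (x i * x i)⁻¹ = x (i+3) * x i := by
    calc (x i * x i) * (x (i+1) * x i) * (x i * x i)⁻¹
        = x i * (x i * x (i+1) * (x i)⁻¹) := by group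
      _ = x i * x (i+2) := by rw [r]
      _ = x (i+3) * x i := r2
  rw [← e]
  exact mul_mem (mul_mem hs (hg i)) (inv_mem hs)

lemma GG2 : ∀ i, x (i+2) * x i ∈ H → x 2 * x 0 ∈ H := by
  intro i
  induction i with
  | zero => exact fun hs => hs
  | succ k ihk =>
    intro hs
    have sq : x (k+1) * x (k+1) ∈ H := sq_of_gap2 hg (k+1) hs
    have t : x (k+4) * x (k+1) ∈ H := by
      have := gap3_of_sq hg (k+1) sq
      rw [show x (k+1+3) = x (k+4) from xeq (by omega)] at this
      exact this
    have c' : (x (k+1))⁻¹ * x (k+3) ∈ H := by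
      have e : (x (k+1))⁻¹ * x (k+3) = (x (k+4) * x (k+1))⁻¹ * (x (k+4) * x (k+3)) := by group
      rw [e]; exact mul_mem (inv_mem t) (hg (k+3))
    have fin : x (k+2) * x k ∈ H := by
      have r : x (k+1) * x (k+2) * (x (k+1))⁻¹ = x (k+3) := rel (k+1) (k+2) (by omega)
      have e : x (k+2) * x k = ((x (k+1))⁻¹ * x (k+3)) * (x (k+1) * x k) := by
        calc x (k+2) * x k
            = ((x (k+1))⁻¹ * (x (k+1) * x (k+2) * (x (k+1))⁻¹)) * (x (k+1) * x k) := by group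
          _ = ((x (k+1))⁻¹ * x (k+3)) * (x (k+1) * x k) := by rw [r]
      rw [e]; exact mul_mem c' (hg k)
    exact ihk fin

lemma GSq : ∀ i, x i * x i ∈ H → x 2 * x 0 ∈ H := by
  intro i hs
  have t : x (i+3) * x i ∈ H := gap3_of_sq hg i hs
  have c' : (x i)⁻¹ * x (i+2) ∈ H := by
    have e : (x i)⁻¹ * x (i+2) = (x (i+3) * x i)⁻¹ * (x (i+3) * x (i+2)) := by group
    rw [e]; exact mul_mem (inv_mem t) (hg (i+2))
  match i, hs, t, c' with
  | 0, hs, t, c' =>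
    have e2 : x 3 * x 1 = (x 1 * x 0) * ((x 0)⁻¹ * x 2) := by
      have := CM 1 2 (by omega)
      calc x 3 * x 1 = x 1 * x 2 := this.symm
        _ = (x 1 * x 0) * ((x 0)⁻¹ * x 2) := by group
    apply GG2 hg 1
    rw [show x (1+2) = x 3 from xeq (by omega), e2]
    exact mul_mem (hg 0) c'
  | (k+1), hs, t, c' =>
    have r : x (k+1) * x (k+2) * (x (k+1))⁻¹ = x (k+3) := rel (k+1) (k+2) (by omega)
    have e : x (k+2) * x k = ((x (k+1))⁻¹ * x (k+3)) * (x (k+1) * x k) := by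
      calc x (k+2) * x k
          = ((x (k+1))⁻¹ * (x (k+1) * x (k+2) * (x (k+1))⁻¹)) * (x (k+1) * x k) := by group
        _ = ((x (k+1))⁻¹ * x (k+3)) * (x (k+1) * x k) := by rw [r]
    apply GG2 hg k
    rw [e]
    exact mul_mem (by rw [show x (k+3) = x (k+1+2) from xeq (by omega)]; exact c') (hg k)

lemma GMain : ∀ e i, x (i+2+e) * x i ∈ H → x 2 * x 0 ∈ H := by
  intro e
  induction e with
  | zero => exact fun i hs => GG2 hg i hs
  | succ f ihf =>
    intro i hs
    have s' : x (i+3+f) * x i ∈ H := by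
      rw [show i+3+f = i+2+(f+1) from by omega]; exact hs
    have c : (x i)⁻¹ * x (i+2+f) ∈ H := by
      have hgp : x (i+3+f) * x (i+2+f) ∈ H := by
        rw [show i+3+f = (i+2+f)+1 from by omega]; exact hg (i+2+f)
      have e : (x i)⁻¹ * x (i+2+f) = (x (i+3+f) * x i)⁻¹ * (x (i+3+f) * x (i+2+f)) := by group
      rw [e]; exact mul_mem (inv_mem s') hgp
    match i, c with
    | 0, c =>
      have e2 : x (1+2+f) * x 1 = (x 1 * x 0) * ((x 0)⁻¹ * x (2+f)) := by
        have hcm : x 1 * x (2+f) = x (2+f+1) * x 1 := CM 1 (2+f) (by omega)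
        calc x (1+2+f) * x 1 = x (2+f+1) * x 1 := by rw [show 1+2+f = 2+f+1 from by omega]
          _ = x 1 * x (2+f) := hcm.symm
          _ = (x 1 * x 0) * ((x 0)⁻¹ * x (2+f)) := by group
      apply ihf 1
      rw [e2]
      exact mul_mem (hg 0) (by rw [show (0:ℕ)+2+f = 2+f from by omega] at c; exact c)
    | (k+1), c =>
      have r : x (k+1) * x (k+2+f) * (x (k+1))⁻¹ = x (k+3+f) := by
        have := rel (k+1) (k+2+f) (by omega)
        rw [show k+2+f+1 = k+3+f from by omega] at this
        exact this
      have e : x (k+2+f) * x k = ((x (k+1))⁻¹ * x (k+3+f)) * (x (k+1) * x k) := by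
        calc x (k+2+f) * x k
            = ((x (k+1))⁻¹ * (x (k+1) * x (k+2+f) * (x (k+1))⁻¹)) * (x (k+1) * x k) := by group
          _ = ((x (k+1))⁻¹ * x (k+3+f)) * (x (k+1) * x k) := by rw [r]
      apply ihf k
      rw [e]
      refine mul_mem ?_ (hg k)
      rw [show k+1+2+f = k+3+f from by omega] at c
      exact c

end descent
/-- For all `j ≥ i ≥ 0` with `j ≠ i + 1`, the subgroup of `F` generated by Jones'
subgroup `F⃗` together with the element `x_i x_j` equals `G`.  (The paper product `x_i x_j`,
with composition left-to-right, is the Lean element `x j * x i`.) -/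
theorem stmt4 (i j : ℕ) (hij : i ≤ j) (h : j ≠ i + 1) :
    JonesF ⊔ Subgroup.closure {x j * x i} = G := by
  apply le_antisymm
  · apply sup_le
    · rw [JonesF]
      apply (Subgroup.closure_le _).2
      rintro g hg
      simp only [Set.mem_insert_iff, Set.mem_singleton_iff] at hg
      rcases hg with rfl | rfl | rfl
      · exact main_mem 0 1 (by omega)
      · exact main_mem 1 2 (by omega)
      · exact main_mem 2 3 (by omega)
    · apply (Subgroup.closure_le _).2
      rintro g hg
      rw [Set.mem_singleton_iff] at hg; subst hg
      exact main_mem i j hij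
  · rw [G]
    apply (Subgroup.closure_le _).2
    rintro g hg
    simp only [Set.mem_insert_iff, Set.mem_singleton_iff] at hg
    set H := JonesF ⊔ Subgroup.closure {x j * x i} with hH
    have hgH : ∀ n, x (n+1) * x n ∈ H := fun n => SetLike.le_def.mp le_sup_left (gJ n)
    have hsH : x j * x i ∈ H :=
      SetLike.le_def.mp le_sup_right (Subgroup.subset_closure (Set.mem_singleton _))
    rcases hg with rfl | rfl
    · rcases hij.lt_or_eq with hlt | rfl
      · obtain ⟨e, rfl⟩ : ∃ e, j = i + 2 + e := ⟨j - (i+2), by omega⟩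
        exact GMain hgH e i hsH
      · exact GSq hgH i hsH
    · exact SetLike.le_def.mp le_sup_left (Subgroup.subset_closure (by simp))
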